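/- (Lemma 3) Let W be symmetric, doubly stochastic and positive definite, with 1 a simple eigenvalue and second-largest eigenvalue λ₂ ∈ (0,1). Suppose each f_i is twice continuously differentiable with H_i-Lipschitz Hessian (in operator norm) and set L_F^H = max_i H_i. Given α > 0, let x̂* be a local minimizer of Q_α (in particular ∇Q_α(x̂*) = 0) and let x̄* = (1/m) Σ_{j=1}^m x̂*_j. Then the minimum eigenvalue of the Hessian of f at x̄* satisfies λ_min(∇²f(x̄*)) ≥ −α · L_F^H · m² · ‖∇F(x̂*)‖ / (1 − λ₂). -/

import Mathlib

set_option maxHeartbeats 1000000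


open scoped BigOperators RealInnerProductSpace
open Matrix MeasureTheory

noncomputable section

/-- The stacked space `(ℝⁿ)ᵐ ≅ ℝ^{mn}`. -/
abbrev BigSpace (m n : ℕ) := EuclideanSpace ℝ (Fin m × Fin n)

/-- The `i`-th block component `x̂ᵢ ∈ ℝⁿ` of `x̂ ∈ ℝ^{mn}`. -/
def comp {m n : ℕ} (x : BigSpace m n) (i : Fin m) : EuclideanSpace ℝ (Fin n) :=
  WithLp.toLp 2 (fun j => x (i, j))

/-- `F(x̂) = Σᵢ fᵢ(x̂ᵢ)`. -/
def stackF {m n : ℕ} (f : Fin m → EuclideanSpace ℝ (Fin n) → ℝ) (x : BigSpace m n) : ℝ :=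
  ∑ i, f i (comp x i)

/-- The action of `Ŵ = W ⊗ Iₙ` on `ℝ^{mn}`. -/
def Wact {m n : ℕ} (W : Matrix (Fin m) (Fin m) ℝ) (x : BigSpace m n) : BigSpace m n :=
  WithLp.toLp 2 (fun p : Fin m × Fin n => ∑ k, W p.1 k * x (k, p.2))

/-- `W` is doubly stochastic: nonnegative entries, all row and column sums equal `1`. -/
def IsDoublyStochastic {m : ℕ} (W : Matrix (Fin m) (Fin m) ℝ) : Prop :=
  (∀ i j, 0 ≤ W i j) ∧ (∀ i, ∑ j, W i j = 1) ∧ (∀ j, ∑ i, W i j = 1)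

/-- The auxiliary function `Q_α(x̂) = F(x̂) + (1/(2α)) x̂ᵀ(I_{mn} − Ŵ)x̂`. -/
def Qaux {m n : ℕ} (f : Fin m → EuclideanSpace ℝ (Fin n) → ℝ)
    (W : Matrix (Fin m) (Fin m) ℝ) (α : ℝ) (x : BigSpace m n) : ℝ :=
  stackF f x + (1 / (2 * α)) * ⟪x, x - Wact W x⟫

/-- The Hessian quadratic form `vᵀ (∇²g(x)) v`, via the second iterated Fréchet derivative. -/
def hessQF {E : Type*} [NormedAddCommGroup E] [NormedSpace ℝ E]
    (g : E → ℝ) (x v : E) : ℝ :=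
  iteratedFDeriv ℝ 2 g x ![v, v]

def compL (m n : ℕ) (i : Fin m) : BigSpace m n →L[ℝ] EuclideanSpace ℝ (Fin n) :=
  LinearMap.toContinuousLinearMap
    { toFun := fun x => comp x i
      map_add' := fun _ _ => rfl
      map_smul' := fun _ _ => by ext; rfl }

lemma contDiff_stackF {m n : ℕ} (f : Fin m → EuclideanSpace ℝ (Fin n) → ℝ)
    (hf : ∀ i, ContDiff ℝ 2 (f i)) : ContDiff ℝ 2 (stackF f) := by
  have : stackF f = fun x => ∑ i, f i (compL m n i x) := rfl
  rw [this]
  exact ContDiff.sum fun i _ => (hf i).comp (compL m n i).contDiff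

def WactL (m n : ℕ) (W : Matrix (Fin m) (Fin m) ℝ) : BigSpace m n →L[ℝ] BigSpace m n :=
  LinearMap.toContinuousLinearMap
    { toFun := Wact W
      map_add' := by
        intro x y; ext p
        simp [Wact, mul_add, Finset.sum_add_distrib]
      map_smul' := by
        intro c x; ext p
        simp [Wact, Finset.mul_sum, mul_left_comm] }

lemma inner_big {m n : ℕ} (x y : BigSpace m n) : ⟪x, y⟫ = ∑ p : Fin m × Fin n, x p * y p := by
  simp [PiLp.inner_apply, RCLike.inner_apply, conj_trivial, mul_comm]

def swapE (m n : ℕ) : ((Fin m × Fin n) × Fin m) ≃ ((Fin m × Fin n) × Fin m) where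
  toFun q := ((q.2, q.1.2), q.1.1)
  invFun q := ((q.2, q.1.2), q.1.1)
  left_inv := by rintro ⟨⟨a, b⟩, c⟩; rfl
  right_inv := by rintro ⟨⟨a, b⟩, c⟩; rfl

lemma Wact_symm {m n : ℕ} {W : Matrix (Fin m) (Fin m) ℝ} (hW : W.IsHermitian)
    (x y : BigSpace m n) : ⟪Wact W x, y⟫ = ⟪x, Wact W y⟫ := by
  have hs : ∀ i k, W i k = W k i := fun i k => by
    simpa [Matrix.conjTranspose_apply] using congrFun (congrFun hW.eq k) i
  rw [inner_big, inner_big]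
  simp only [Wact, Finset.sum_mul, Finset.mul_sum]
  have h1 : (∑ p : Fin m × Fin n, ∑ k : Fin m, W p.1 k * x (k, p.2) * y p)
      = ∑ q : (Fin m × Fin n) × Fin m, W q.1.1 q.2 * x (q.2, q.1.2) * y q.1 :=
    (Fintype.sum_prod_type (f := fun q : (Fin m × Fin n) × Fin m =>
      W q.1.1 q.2 * x (q.2, q.1.2) * y q.1)).symm
  have h2 : (∑ p : Fin m × Fin n, ∑ k : Fin m, x p * (W p.1 k * y (k, p.2)))
      = ∑ q : (Fin m × Fin n) × Fin m, x q.1 * (W q.1.1 q.2 * y (q.2, q.1.2)) :=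
    (Fintype.sum_prod_type (f := fun q : (Fin m × Fin n) × Fin m =>
      x q.1 * (W q.1.1 q.2 * y (q.2, q.1.2)))).symm
  rw [h1, h2]
  exact Fintype.sum_equiv (swapE m n) _ _ (by rintro ⟨⟨a, b⟩, c⟩; simp [swapE, hs a c]; ring)

def sliceWL (m : ℕ) (W : Matrix (Fin m) (Fin m) ℝ) :
    EuclideanSpace ℝ (Fin m) →ₗ[ℝ] EuclideanSpace ℝ (Fin m) where
  toFun z := WithLp.toLp 2 (fun i => ∑ k, W i k * z k)
  map_add' x y := by ext i; simp [mul_add, Finset.sum_add_distrib]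
  map_smul' c x := by ext i; simp [Finset.mul_sum, mul_left_comm]

lemma inner_slice {m : ℕ} (x y : EuclideanSpace ℝ (Fin m)) : ⟪x, y⟫ = ∑ i, x i * y i := by
  simp [PiLp.inner_apply, RCLike.inner_apply, conj_trivial, mul_comm]

lemma slice_spectral {m : ℕ} (hm : 0 < m) {W : Matrix (Fin m) (Fin m) ℝ} (hW : W.IsHermitian)
    (hrow : ∀ i, ∑ j, W i j = 1)
    (hsimple : ∃! i, hW.eigenvalues i = 1)
    (lam2 : ℝ) (hub : ∀ i, hW.eigenvalues i = 1 ∨ hW.eigenvalues i ≤ lam2)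
    (z : EuclideanSpace ℝ (Fin m)) (hz : ∑ i, z i = 0) :
    ⟪z, sliceWL m W z⟫ ≤ lam2 * ‖z‖ ^ 2 := by
  classical
  obtain ⟨i₀, hi₀, huniq⟩ := hsimple
  set B := hW.eigenvectorBasis with hB
  set lam := hW.eigenvalues with hlam
  set ones : EuclideanSpace ℝ (Fin m) := WithLp.toLp 2 (fun _ => (1 : ℝ)) with hones
  have heig : ∀ i, sliceWL m W (B i) = lam i • (B i) := by
    intro i
    ext j
    have := congrFun (hW.mulVec_eigenvectorBasis i) j
    simpa [sliceWL, Matrix.mulVec, dotProduct] using this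
  have hsym : ∀ a b : EuclideanSpace ℝ (Fin m), ⟪sliceWL m W a, b⟫ = ⟪a, sliceWL m W b⟫ := by
    intro a b
    have hs : ∀ i k, W i k = W k i := fun i k => by
      simpa [Matrix.conjTranspose_apply] using congrFun (congrFun hW.eq k) i
    rw [inner_slice, inner_slice]
    simp only [sliceWL, LinearMap.coe_mk, AddHom.coe_mk, Finset.sum_mul, Finset.mul_sum]
    rw [Finset.sum_comm]
    congr 1; funext i; congr 1; funext k
    rw [hs k i]; ring
  have hWones : sliceWL m W ones = ones := by
    ext i; simpa [sliceWL, hones] using hrow i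
  have horth : ∀ i, i ≠ i₀ → ⟪(B i), ones⟫ = 0 := by
    intro i hi
    have hl : lam i ≠ 1 := fun h => hi (huniq i h)
    have h1 : ⟪sliceWL m W (B i), ones⟫ = ⟪(B i), ones⟫ := by
      rw [hsym, hWones]
    rw [heig, real_inner_smul_left] at h1
    have hfac : (lam i - 1) * ⟪(B i), ones⟫ = 0 := by ring_nf; linarith [h1]
    rcases mul_eq_zero.mp hfac with h | h
    · exact absurd (by linarith : lam i = 1) hl
    · exact h
  set d : ℝ := ⟪(B i₀ : EuclideanSpace ℝ (Fin m)), ones⟫ with hd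
  have hones_expand : ones = d • (B i₀) := by
    have hrep := B.sum_repr ones
    rw [← hrep]
    rw [Finset.sum_eq_single i₀]
    · rw [B.repr_apply_apply]
    · intro i _ hi
      rw [B.repr_apply_apply, horth i hi, zero_smul]
    · intro h; exact absurd (Finset.mem_univ i₀) h
  have hdne : d ≠ 0 := by
    intro h0
    have h00 : ones = 0 := by rw [hones_expand, h0, zero_smul]
    have := congrArg (fun w => w ⟨0, hm⟩) h00
    simp [hones] at this
  have hc0 : ⟪(B i₀), z⟫ = 0 := by
    have hBi : (B i₀ : EuclideanSpace ℝ (Fin m)) = d⁻¹ • ones := by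
      rw [hones_expand, smul_smul, inv_mul_cancel₀ hdne, one_smul]
    rw [hBi, real_inner_smul_left]
    have : ⟪ones, z⟫ = (0 : ℝ) := by
      rw [inner_slice]; simpa [hones] using hz
    rw [this, mul_zero]
  set c : Fin m → ℝ := fun i => B.repr z i with hc
  have hzc : z = ∑ i, c i • B i := (B.sum_repr z).symm
  have hWz : sliceWL m W z = ∑ i, (lam i * c i) • B i := by
    conv_lhs => rw [hzc]
    rw [map_sum]
    congr 1; funext i
    rw [LinearMap.map_smul, heig, smul_smul, mul_comm (c i) (lam i)]
  have hip : ∀ i, (⟪z, (B i : EuclideanSpace ℝ (Fin m))⟫ : ℝ) = c i := by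
    intro i
    rw [real_inner_comm, ← B.repr_apply_apply]
  have hinner1 : ⟪z, sliceWL m W z⟫ = ∑ i, lam i * c i * c i := by
    rw [hWz, inner_sum]
    congr 1; funext i
    rw [real_inner_smul_right, hip i]
  have hinner2 : ‖z‖ ^ 2 = ∑ i, c i * c i := by
    rw [← real_inner_self_eq_norm_sq]
    have e1 : (⟪z, z⟫ : ℝ) = ⟪z, ∑ i, c i • B i⟫ :=
      congrArg (fun w => (inner ℝ z w : ℝ)) hzc
    rw [e1, inner_sum]
    congr 1; funext i
    rw [real_inner_smul_right, hip i, mul_comm]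
  rw [hinner1, hinner2, Finset.mul_sum]
  apply Finset.sum_le_sum
  intro i _
  by_cases hii : i = i₀
  · subst hii
    have : c i = 0 := by rw [hc]; simp only []; rw [B.repr_apply_apply]; exact hc0
    simp [this]
  · have hl : lam i ≤ lam2 := (hub i).resolve_left fun h => hii (huniq i h)
    nlinarith [mul_self_nonneg (c i)]


lemma WactL_apply {m n : ℕ} (W : Matrix (Fin m) (Fin m) ℝ) (x : BigSpace m n) :
    WactL m n W x = Wact W x := rfl

lemma sliceWL_apply {m : ℕ} (W : Matrix (Fin m) (Fin m) ℝ) (z : EuclideanSpace ℝ (Fin m))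
    (i : Fin m) : sliceWL m W z i = ∑ k, W i k * z k := rfl

lemma stationary {m n : ℕ} (f : Fin m → EuclideanSpace ℝ (Fin n) → ℝ)
    (hf : ∀ i, ContDiff ℝ 2 (f i)) {W : Matrix (Fin m) (Fin m) ℝ} (hW : W.IsHermitian)
    {α : ℝ} (hα : 0 < α) {xstar : BigSpace m n} (hmin : IsLocalMin (Qaux f W α) xstar) :
    xstar - Wact W xstar = (-α) • gradient (stackF f) xstar := by
  set x := xstar
  have hA : HasFDerivAt (fun z : BigSpace m n => z - Wact W z)
      (ContinuousLinearMap.id ℝ (BigSpace m n) - WactL m n W) x := by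
    have : (fun z : BigSpace m n => z - Wact W z)
        = fun z => (ContinuousLinearMap.id ℝ (BigSpace m n) - WactL m n W) z := by
      funext z; simp [WactL_apply]
    rw [this]
    exact (ContinuousLinearMap.id ℝ (BigSpace m n) - WactL m n W).hasFDerivAt
  have hq : HasFDerivAt (fun z : BigSpace m n => (⟪z, z - Wact W z⟫ : ℝ)) _ x :=
    (hasFDerivAt_id x).inner ℝ hA
  have hFd : DifferentiableAt ℝ (stackF f) x :=
    ((contDiff_stackF f hf).differentiable (by norm_num)).differentiableAt
  have hQ : HasFDerivAt (Qaux f W α)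
      (fderiv ℝ (stackF f) x + (1 / (2 * α)) • _) x :=
    hFd.hasFDerivAt.add (hq.const_mul (1 / (2 * α)))
  have hzero := hmin.fderiv_eq_zero
  have heval : ∀ h : BigSpace m n,
      fderiv ℝ (stackF f) x h
        + (1 / (2 * α)) * ((⟪x, h - WactL m n W h⟫ : ℝ) + ⟪h, x - Wact W x⟫) = 0 := by
    intro h
    have h0 := hQ.fderiv.symm.trans hzero
    have := congrFun (congrArg (fun L : BigSpace m n →L[ℝ] ℝ => (L : BigSpace m n → ℝ)) h0) h
    simpa [fderivInnerCLM_apply, WactL_apply] using this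
  have hinner : ∀ h : BigSpace m n,
      (⟪gradient (stackF f) x + α⁻¹ • (x - Wact W x), h⟫ : ℝ) = 0 := by
    intro h
    have h1 : (⟪gradient (stackF f) x, h⟫ : ℝ) = fderiv ℝ (stackF f) x h := by
      rw [gradient]; exact InnerProductSpace.toDual_symm_apply
    have h2 : (⟪x, h - WactL m n W h⟫ : ℝ) = ⟪x - Wact W x, h⟫ := by
      rw [WactL_apply, inner_sub_right, inner_sub_left, ← Wact_symm hW x h]
    have h3 := heval h
    rw [h2] at h3
    rw [inner_add_left, h1, real_inner_smul_left]
    have h4 : (⟪h, x - Wact W x⟫ : ℝ) = ⟪x - Wact W x, h⟫ := real_inner_comm _ _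
    rw [h4] at h3
    have hc : (1 / (2 * α)) * ((⟪x - Wact W x, h⟫ : ℝ) + ⟪x - Wact W x, h⟫)
        = α⁻¹ * ⟪x - Wact W x, h⟫ := by
      field_simp; ring
    rw [hc] at h3
    linarith [h3]
  have hvec : gradient (stackF f) x + α⁻¹ • (x - Wact W x) = 0 := by
    have := hinner (gradient (stackF f) x + α⁻¹ • (x - Wact W x))
    exact inner_self_eq_zero.mp this
  have h6 : α • gradient (stackF f) x + α • α⁻¹ • (x - Wact W x) = 0 := by
    rw [← smul_add, hvec, smul_zero]
  rw [smul_smul, mul_inv_cancel₀ hα.ne', one_smul] at h6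
  rw [eq_comm, neg_smul]
  exact (eq_neg_of_add_eq_zero_right h6).symm

lemma big_spectral {m n : ℕ} (hm : 0 < m) {W : Matrix (Fin m) (Fin m) ℝ} (hW : W.IsHermitian)
    (hrow : ∀ i, ∑ j, W i j = 1)
    (hsimple : ∃! i, hW.eigenvalues i = 1)
    (lam2 : ℝ) (hub : ∀ i, hW.eigenvalues i = 1 ∨ hW.eigenvalues i ≤ lam2)
    (y : BigSpace m n) (hy : ∀ j, ∑ i, y (i, j) = 0) :
    ⟪y, Wact W y⟫ ≤ lam2 * ‖y‖ ^ 2 := by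
  classical
  set z : Fin n → EuclideanSpace ℝ (Fin m) := fun j => WithLp.toLp 2 (fun i => y (i, j)) with hzdef
  have h1 : (⟪y, Wact W y⟫ : ℝ) = ∑ j, ⟪z j, sliceWL m W (z j)⟫ := by
    rw [inner_big, Fintype.sum_prod_type, Finset.sum_comm]
    refine Finset.sum_congr rfl fun j _ => ?_
    rw [inner_slice]
    refine Finset.sum_congr rfl fun i _ => ?_
    rw [sliceWL_apply]
    rfl
  have h2 : ‖y‖ ^ 2 = ∑ j, ‖z j‖ ^ 2 := by
    rw [← real_inner_self_eq_norm_sq, inner_big, Fintype.sum_prod_type, Finset.sum_comm]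
    congr 1; funext j
    rw [← real_inner_self_eq_norm_sq, inner_slice]
  rw [h1, h2, Finset.mul_sum]
  exact Finset.sum_le_sum fun j _ =>
    slice_spectral hm hW hrow hsimple lam2 hub (z j) (hy j)

variable {E : Type*} [NormedAddCommGroup E] [InnerProductSpace ℝ E]

/-- first derivative along a line -/
lemma line_deriv1 (h : E → ℝ) (hh : ContDiff ℝ 2 h) (x v : E) (t : ℝ) :
    HasDerivAt (fun s : ℝ => h (x + s • v)) (fderiv ℝ h (x + t • v) v) t := by
  have hl : HasDerivAt (fun s : ℝ => x + s • v) v t := by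
    simpa using ((hasDerivAt_id t).smul_const v).const_add x
  have hdiff : DifferentiableAt ℝ h (x + t • v) :=
    (hh.differentiable (by norm_num)).differentiableAt
  exact (hdiff.hasFDerivAt.comp_hasDerivAt t hl)

/-- second derivative along a line -/
lemma line_deriv2 (h : E → ℝ) (hh : ContDiff ℝ 2 h) (x v : E) :
    HasDerivAt (fun s : ℝ => fderiv ℝ h (x + s • v) v)
      (iteratedFDeriv ℝ 2 h x ![v, v]) (0 : ℝ) := by
  have hl : HasDerivAt (fun s : ℝ => x + s • v) v (0 : ℝ) := by
    simpa using ((hasDerivAt_id (0:ℝ)).smul_const v).const_add x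
  have hfd : DifferentiableAt ℝ (fderiv ℝ h) (x + (0:ℝ) • v) := by
    have := (hh.fderiv_right (m := 1) (by norm_num)).differentiable (by norm_num)
    exact this.differentiableAt
  have hc : HasFDerivAt (fun y => fderiv ℝ h y v)
      ((fderiv ℝ (fderiv ℝ h) (x + (0:ℝ) • v)).flip v) (x + (0:ℝ) • v) := by
    have h1 : HasFDerivAt (fderiv ℝ h) (fderiv ℝ (fderiv ℝ h) (x + (0:ℝ) • v)) (x + (0:ℝ) • v) :=
      hfd.hasFDerivAt
    exact h1.clm_apply (hasFDerivAt_const v _) |>.congr_fderiv (by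
      ext w
      simp)
  have := hc.comp_hasDerivAt (0:ℝ) hl
  have h2 : iteratedFDeriv ℝ 2 h x ![v, v] = fderiv ℝ (fderiv ℝ h) x v v := by
    rw [iteratedFDeriv_two_apply]; rfl
  rw [h2]; simp at this; exact this

/-- 1D second-order necessary condition -/
lemma second_order_1d (g : ℝ → ℝ) (hg : Differentiable ℝ g) (hmin : IsLocalMin g 0)
    {d : ℝ} (hd : HasDerivAt (deriv g) d 0) : 0 ≤ d := by
  by_contra hneg
  push_neg at hneg
  have hg0 : deriv g 0 = 0 := hmin.deriv_eq_zero
  have hslope : Filter.Tendsto (slope (deriv g) 0) (nhdsWithin 0 {(0:ℝ)}ᶜ) (nhds d) :=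
    hasDerivAt_iff_tendsto_slope.mp hd
  have hev : ∀ᶠ t in nhdsWithin 0 {(0:ℝ)}ᶜ, slope (deriv g) 0 t < d / 2 :=
    hslope.eventually_lt_const (by linarith)
  rw [eventually_nhdsWithin_iff] at hev
  rw [Metric.eventually_nhds_iff] at hev
  obtain ⟨ε, hε, hball⟩ := hev
  have hmin' := hmin
  rw [IsLocalMin, IsMinFilter, Metric.eventually_nhds_iff] at hmin'
  obtain ⟨ε', hε', hball'⟩ := hmin'
  set t₀ : ℝ := min ε ε' / 2 with ht₀
  have ht₀pos : 0 < t₀ := by positivity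
  have hderivneg : ∀ t ∈ Set.Ioo (0:ℝ) t₀, deriv g t < 0 := by
    intro t ht
    have htpos := ht.1
    have htlt : t < ε := by
      have : t₀ ≤ ε / 2 := by
        rw [ht₀]; gcongr; exact min_le_left _ _
      nlinarith [ht.2]
    have hdist : dist t 0 < ε := by
      rw [Real.dist_eq, sub_zero, abs_of_pos htpos]; exact htlt
    have := hball hdist (by simp [htpos.ne'])
    rw [slope_def_field] at this
    have hslope_val : (deriv g t - deriv g 0) / (t - 0) < d / 2 := by
      simpa [div_eq_inv_mul] using this
    rw [hg0, sub_zero, sub_zero] at hslope_val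
    have : deriv g t < d / 2 * t := by
      rwa [div_lt_iff₀ htpos] at hslope_val
    nlinarith
  have hanti : StrictAntiOn g (Set.Icc 0 t₀) := by
    apply strictAntiOn_of_deriv_neg (convex_Icc 0 t₀) (hg.continuous.continuousOn)
    intro t ht
    rw [interior_Icc] at ht
    exact hderivneg t ht
  have hlt : g t₀ < g 0 :=
    hanti (Set.left_mem_Icc.mpr ht₀pos.le) (Set.right_mem_Icc.mpr ht₀pos.le) ht₀pos
  have hge : g 0 ≤ g t₀ := by
    apply hball'
    rw [Real.dist_eq, sub_zero, abs_of_pos ht₀pos]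
    have : t₀ ≤ ε' / 2 := by
      rw [ht₀]; gcongr; exact min_le_right _ _
    linarith
  linarith

lemma sum_hess_nonneg {m n : ℕ} (f : Fin m → EuclideanSpace ℝ (Fin n) → ℝ)
    (hf : ∀ i, ContDiff ℝ 2 (f i)) {W : Matrix (Fin m) (Fin m) ℝ}
    (hrow : ∀ i, ∑ j, W i j = 1) {α : ℝ}
    {xstar : BigSpace m n} (hmin : IsLocalMin (Qaux f W α) xstar)
    (v : EuclideanSpace ℝ (Fin n)) :
    0 ≤ ∑ i, iteratedFDeriv ℝ 2 (f i) (comp xstar i) ![v, v] := by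
  classical
  set x := xstar with hx
  set vhat : BigSpace m n := WithLp.toLp 2 (fun p : Fin m × Fin n => v p.2) with hvhat
  have hWvhat : Wact W vhat = vhat := by
    ext p
    simp only [Wact, hvhat]
    rw [← Finset.sum_mul]
    rw [hrow p.1, one_mul]
  have hcomp_line : ∀ (t : ℝ) (i : Fin m), comp (x + t • vhat) i = comp x i + t • v := by
    intro t i; ext j; simp [_root_.comp, hvhat]
  -- the penalty along the line
  set qa : ℝ := ⟪x, x - Wact W x⟫ with hqa
  set qb : ℝ := ⟪vhat, x - Wact W x⟫ with hqb
  have hWlin : ∀ t : ℝ, Wact W (x + t • vhat) = Wact W x + t • Wact W vhat := by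
    intro t; ext p
    simp [Wact, mul_add, Finset.sum_add_distrib, Finset.mul_sum, mul_left_comm]
  have hpen : ∀ t : ℝ, (⟪x + t • vhat, (x + t • vhat) - Wact W (x + t • vhat)⟫ : ℝ)
      = qa + t * qb := by
    intro t
    rw [hWlin t, hWvhat]
    have : (x + t • vhat) - (Wact W x + t • vhat) = x - Wact W x := by abel
    rw [this, inner_add_left, real_inner_smul_left, hqa, hqb]
  set g : ℝ → ℝ := fun t => Qaux f W α (x + t • vhat) with hg
  have hgeq : g = fun t => (∑ i, f i (comp x i + t • v))
      + ((1 / (2 * α)) * qa + t * ((1 / (2 * α)) * qb)) := by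
    funext t
    rw [hg]
    simp only [Qaux, stackF]
    rw [hpen t]
    have : ∀ i : Fin m, f i (comp (x + t • vhat) i) = f i (comp x i + t • v) := fun i => by
      rw [hcomp_line t i]
    rw [Finset.sum_congr rfl fun i _ => this i]
    ring
  have hgmin : IsLocalMin g 0 := by
    have hcont : Continuous (fun t : ℝ => x + t • vhat) := by fun_prop
    have h0 : IsLocalMin (Qaux f W α) ((fun t : ℝ => x + t • vhat) 0) := by
      simpa using hmin
    exact IsLocalMin.comp_continuous (f := Qaux f W α) (g := fun t : ℝ => x + t • vhat)
      (b := (0:ℝ)) h0 hcont.continuousAt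
  have hgd : ∀ t : ℝ, HasDerivAt g
      ((∑ i, fderiv ℝ (f i) (comp x i + t • v) v) + (1 / (2 * α)) * qb) t := by
    intro t
    rw [hgeq]
    apply HasDerivAt.add
    · exact HasDerivAt.fun_sum fun i _ => line_deriv1 (f i) (hf i) (comp x i) v t
    · simpa using ((hasDerivAt_id t).mul_const ((1 / (2 * α)) * qb)).const_add
        ((1 / (2 * α)) * qa)
  have hgdiff : Differentiable ℝ g := fun t => ((hgd t).differentiableAt)
  have hderivg : deriv g = fun t =>
      (∑ i, fderiv ℝ (f i) (comp x i + t • v) v) + (1 / (2 * α)) * qb := by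
    funext t; exact (hgd t).deriv
  have hd2 : HasDerivAt (deriv g)
      (∑ i, iteratedFDeriv ℝ 2 (f i) (comp x i) ![v, v]) 0 := by
    rw [hderivg]
    have hsum : HasDerivAt (fun t : ℝ => ∑ i, fderiv ℝ (f i) (comp x i + t • v) v)
        (∑ i, iteratedFDeriv ℝ 2 (f i) (comp x i) ![v, v]) 0 :=
      HasDerivAt.fun_sum fun i _ => line_deriv2 (f i) (hf i) (comp x i) v
    simpa using hsum.add_const ((1 / (2 * α)) * qb)
  exact second_order_1d g hgdiff hgmin hd2

/-- Lemma 3: under the hypotheses on `W` as before, with each `fᵢ` twice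
continuously differentiable with `Hᵢ`-Lipschitz Hessian and `L_F^H = maxᵢ Hᵢ`, if `x̂*`
is a local minimizer of `Q_α` and `x̄* = (1/m) Σⱼ x̂*ⱼ`, then
`λ_min(∇²f(x̄*)) ≥ −α L_F^H m² ‖∇F(x̂*)‖ / (1 − λ₂)` (stated via the Hessian
quadratic form: `vᵀ ∇²f(x̄*) v ≥ −c ‖v‖²` for all `v`). -/
theorem stmt9 {m n : ℕ} (hm : 0 < m)
    (f : Fin m → EuclideanSpace ℝ (Fin n) → ℝ)
    (hf : ∀ i, ContDiff ℝ 2 (f i))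
    (H : Fin m → ℝ)
    (hHess : ∀ i x y, ‖iteratedFDeriv ℝ 2 (f i) x - iteratedFDeriv ℝ 2 (f i) y‖ ≤ H i * ‖x - y‖)
    (W : Matrix (Fin m) (Fin m) ℝ) (hW : W.IsHermitian)
    (hds : IsDoublyStochastic W) (hpd : W.PosDef)
    (hsimple : ∃! i, hW.eigenvalues i = 1)
    (lam2 : ℝ) (hlam2_pos : 0 < lam2) (hlam2_lt : lam2 < 1)
    (hub : ∀ i, hW.eigenvalues i = 1 ∨ hW.eigenvalues i ≤ lam2)
    (hmem : ∃ i, hW.eigenvalues i ≠ 1 ∧ hW.eigenvalues i = lam2)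
    (α : ℝ) (hα : 0 < α)
    (xstar : BigSpace m n) (hmin : IsLocalMin (Qaux f W α) xstar) :
    ∀ v : EuclideanSpace ℝ (Fin n),
      -(α * (⨆ i, H i) * (m : ℝ) ^ 2 * ‖gradient (stackF f) xstar‖ / (1 - lam2)) * ‖v‖ ^ 2 ≤
        hessQF (fun x => ∑ i, f i x) ((m : ℝ)⁻¹ • ∑ j, comp xstar j) v := by
  classical
  intro v
  set G := gradient (stackF f) xstar with hG
  set xbar : EuclideanSpace ℝ (Fin n) := (m : ℝ)⁻¹ • ∑ j, comp xstar j with hxbar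
  -- split hessian of the sum
  have hsplit : hessQF (fun x => ∑ i, f i x) xbar v
      = ∑ i, iteratedFDeriv ℝ 2 (f i) xbar ![v, v] := by
    rw [hessQF]
    rw [iteratedFDeriv_sum (fun i _ => hf i)]
    rw [Finset.sum_apply]
    rw [ContinuousMultilinearMap.sum_apply]
  by_cases hv : v = 0
  · rw [hsplit]
    have hz : ∀ i : Fin m, iteratedFDeriv ℝ 2 (f i) xbar ![v, v] = 0 := by
      intro i
      have : (![v, v] : Fin 2 → EuclideanSpace ℝ (Fin n)) 0 = 0 := by simp [hv]
      exact (iteratedFDeriv ℝ 2 (f i) xbar).map_coord_zero 0 this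
    rw [Finset.sum_congr rfl fun i _ => hz i, Finset.sum_const, smul_zero]
    simp [hv]
  -- v ≠ 0 : Fin n is nonempty, H i ≥ 0
  obtain ⟨j₀, hj₀⟩ : ∃ j, v j ≠ 0 := by
    by_contra hc
    push_neg at hc
    exact hv (by ext j; exact hc j)
  have hHnn : ∀ i, 0 ≤ H i := by
    intro i
    have h1 := hHess i (EuclideanSpace.single j₀ 1) 0
    have h2 : ‖(EuclideanSpace.single j₀ (1:ℝ)) - 0‖ = 1 := by
      rw [sub_zero, EuclideanSpace.norm_single, norm_one]
    rw [h2, mul_one] at h1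
    exact le_trans (norm_nonneg _) h1
  set L : ℝ := ⨆ i, H i with hL
  have hLB : ∀ i, H i ≤ L := fun i => le_ciSup (Set.Finite.bddAbove (Set.finite_range H)) i
  have hLnn : 0 ≤ L := le_trans (hHnn ⟨0, hm⟩) (hLB ⟨0, hm⟩)
  -- consensus decomposition
  set cons : BigSpace m n := WithLp.toLp 2 (fun p : Fin m × Fin n => xbar p.2) with hcons
  set y : BigSpace m n := xstar - cons with hy
  have hxbarj : ∀ j, xbar j = (m : ℝ)⁻¹ * ∑ k, xstar (k, j) := by
    intro j
    rw [hxbar]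
    rw [PiLp.smul_apply, smul_eq_mul]
    congr 1
    rw [WithLp.ofLp_sum, Finset.sum_apply]
    rfl
  have hyj : ∀ p : Fin m × Fin n, y p = xstar p - xbar p.2 := by
    intro p; rw [hy]; rw [PiLp.sub_apply]
  have hslices : ∀ j, ∑ i, y (i, j) = 0 := by
    intro j
    have h1 : ∀ i : Fin m, y (i, j) = xstar (i, j) - xbar j := fun i => hyj (i, j)
    rw [Finset.sum_congr rfl fun i _ => h1 i]
    rw [Finset.sum_sub_distrib, Finset.sum_const, Finset.card_univ, Fintype.card_fin]
    rw [hxbarj j, nsmul_eq_mul, ← mul_assoc, mul_inv_cancel₀ (by positivity : (m:ℝ) ≠ 0), one_mul]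
    ring
  -- Wact fixes consensus vectors
  have hWcons : Wact W cons = cons := by
    ext p
    simp only [Wact, hcons]
    rw [← Finset.sum_mul, hds.2.1 p.1, one_mul]
  have hWlin : Wact W y = Wact W xstar - Wact W cons := by
    ext p
    rw [hy]
    show ∑ k, W p.1 k * (xstar - cons) (k, p.2) = (Wact W xstar - Wact W cons) p
    rw [PiLp.sub_apply]
    show _ = (∑ k, W p.1 k * xstar (k, p.2)) - ∑ k, W p.1 k * cons (k, p.2)
    rw [← Finset.sum_sub_distrib]
    refine Finset.sum_congr rfl fun k _ => ?_
    rw [PiLp.sub_apply, mul_sub]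
  have hstat := stationary f hf hW hα hmin
  have hkey : y - Wact W y = (-α) • G := by
    rw [hWlin, hWcons, hy, ← hstat]; abel
  -- norm bound on y
  have hGn : (0:ℝ) ≤ ‖G‖ := norm_nonneg _
  have hden : (0:ℝ) < 1 - lam2 := by linarith
  have hyb : ‖y‖ ≤ α * ‖G‖ / (1 - lam2) := by
    have hsp := big_spectral hm hW hds.2.1 hsimple lam2 hub y hslices
    have h1 : (1 - lam2) * ‖y‖ ^ 2 ≤ ⟪y, y - Wact W y⟫ := by
      rw [inner_sub_right, real_inner_self_eq_norm_sq]
      nlinarith [hsp]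
    rw [hkey] at h1
    have h2 : (⟪y, (-α) • G⟫ : ℝ) ≤ α * ‖y‖ * ‖G‖ := by
      rw [real_inner_smul_right]
      have := abs_real_inner_le_norm y G
      have habs : -(α * ⟪y, G⟫) ≤ α * |⟪y, G⟫| := by
        rw [neg_le]
        nlinarith [abs_nonneg (⟪y, G⟫ : ℝ), neg_abs_le (⟪y, G⟫ : ℝ), le_abs_self (⟪y, G⟫ : ℝ)]
      calc (-α) * ⟪y, G⟫ = -(α * ⟪y, G⟫) := by ring
        _ ≤ α * |⟪y, G⟫| := habs
        _ ≤ α * (‖y‖ * ‖G‖) := by nlinarith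
        _ = α * ‖y‖ * ‖G‖ := by ring
    by_cases hy0 : ‖y‖ = 0
    · rw [hy0]; positivity
    · have hypos : 0 < ‖y‖ := lt_of_le_of_ne (norm_nonneg _) (Ne.symm hy0)
      rw [le_div_iff₀ hden]
      nlinarith [h1.trans h2]
  -- block bound
  have hblock : ∀ i, ‖xbar - comp xstar i‖ ≤ ‖y‖ := by
    intro i
    have hcy : xbar - comp xstar i = -(comp y i) := by
      ext j
      rw [PiLp.neg_apply]
      have : comp y i j = y (i, j) := rfl
      rw [this, hyj (i, j), PiLp.sub_apply]
      show xbar j - xstar (i, j) = -(xstar (i,j) - xbar j)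
      ring
    rw [hcy, norm_neg]
    -- ‖comp y i‖ ≤ ‖y‖
    have h1 : ‖comp y i‖ ^ 2 ≤ ‖y‖ ^ 2 := by
      rw [← real_inner_self_eq_norm_sq, ← real_inner_self_eq_norm_sq]
      rw [inner_big]
      have : (⟪comp y i, comp y i⟫ : ℝ) = ∑ j, y (i, j) * y (i, j) := by
        rw [inner_slice]; rfl
      rw [this, Fintype.sum_prod_type]
      have hnn : ∀ k ∈ (Finset.univ : Finset (Fin m)), (0:ℝ) ≤ ∑ j, y (k, j) * y (k, j) :=
        fun k _ => Finset.sum_nonneg fun j _ => mul_self_nonneg _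
      exact Finset.single_le_sum hnn (Finset.mem_univ i)
    have := Real.sqrt_le_sqrt h1
    rwa [Real.sqrt_sq (norm_nonneg _), Real.sqrt_sq (norm_nonneg _)] at this
  -- hessian Lipschitz transfer
  have htrans : ∀ i, iteratedFDeriv ℝ 2 (f i) (comp xstar i) ![v, v]
        - H i * ‖y‖ * ‖v‖ ^ 2 ≤ iteratedFDeriv ℝ 2 (f i) xbar ![v, v] := by
    intro i
    have h1 := hHess i xbar (comp xstar i)
    have h2 : |(iteratedFDeriv ℝ 2 (f i) xbar - iteratedFDeriv ℝ 2 (f i) (comp xstar i)) ![v, v]|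
        ≤ ‖iteratedFDeriv ℝ 2 (f i) xbar - iteratedFDeriv ℝ 2 (f i) (comp xstar i)‖
            * (‖v‖ * ‖v‖) := by
      have := (iteratedFDeriv ℝ 2 (f i) xbar
        - iteratedFDeriv ℝ 2 (f i) (comp xstar i)).le_opNorm ![v, v]
      rw [Fin.prod_univ_two] at this
      simpa [Real.norm_eq_abs] using this
    have h3 : (iteratedFDeriv ℝ 2 (f i) xbar - iteratedFDeriv ℝ 2 (f i) (comp xstar i)) ![v, v]
        = iteratedFDeriv ℝ 2 (f i) xbar ![v, v]
          - iteratedFDeriv ℝ 2 (f i) (comp xstar i) ![v, v] := rfl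
    rw [h3] at h2
    have h4 : ‖iteratedFDeriv ℝ 2 (f i) xbar - iteratedFDeriv ℝ 2 (f i) (comp xstar i)‖
        * (‖v‖ * ‖v‖) ≤ H i * ‖y‖ * ‖v‖ ^ 2 := by
      have h5 : H i * ‖xbar - comp xstar i‖ ≤ H i * ‖y‖ :=
        mul_le_mul_of_nonneg_left (hblock i) (hHnn i)
      have h6 := h1.trans h5
      have : ‖v‖ * ‖v‖ = ‖v‖ ^ 2 := by ring
      rw [this]
      exact mul_le_mul_of_nonneg_right h6 (by positivity)
    have h7 := (abs_le.mp (h2.trans h4)).1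
    linarith
  -- final combination
  have hS := sum_hess_nonneg f hf hds.2.1 hmin v
  rw [hsplit]
  have hsum : ∑ i, (iteratedFDeriv ℝ 2 (f i) (comp xstar i) ![v, v] - H i * ‖y‖ * ‖v‖ ^ 2)
      ≤ ∑ i, iteratedFDeriv ℝ 2 (f i) xbar ![v, v] :=
    Finset.sum_le_sum fun i _ => htrans i
  rw [Finset.sum_sub_distrib] at hsum
  have hHsum : ∑ i : Fin m, H i * ‖y‖ * ‖v‖ ^ 2 ≤ (m : ℝ) * L * ‖y‖ * ‖v‖ ^ 2 := by
    have : ∀ i : Fin m, H i * ‖y‖ * ‖v‖ ^ 2 ≤ L * ‖y‖ * ‖v‖ ^ 2 := fun i =>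
      mul_le_mul_of_nonneg_right
        (mul_le_mul_of_nonneg_right (hLB i) (norm_nonneg y)) (sq_nonneg _)
    calc ∑ i : Fin m, H i * ‖y‖ * ‖v‖ ^ 2 ≤ ∑ _i : Fin m, L * ‖y‖ * ‖v‖ ^ 2 :=
          Finset.sum_le_sum fun i _ => this i
      _ = (m : ℝ) * L * ‖y‖ * ‖v‖ ^ 2 := by
          rw [Finset.sum_const, Finset.card_univ, Fintype.card_fin, nsmul_eq_mul]; ring
  have hfinal : (m : ℝ) * L * ‖y‖ * ‖v‖ ^ 2
      ≤ α * L * (m : ℝ) ^ 2 * ‖G‖ / (1 - lam2) * ‖v‖ ^ 2 := by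
    have hm1 : (1:ℝ) ≤ (m:ℝ) := by exact_mod_cast hm
    have h8 : (m : ℝ) * L * ‖y‖ ≤ (m : ℝ) * L * (α * ‖G‖ / (1 - lam2)) :=
      mul_le_mul_of_nonneg_left hyb (by positivity)
    have h9 : (m : ℝ) * L * (α * ‖G‖ / (1 - lam2)) ≤ α * L * (m : ℝ) ^ 2 * ‖G‖ / (1 - lam2) := by
      have e : (m : ℝ) * L * (α * ‖G‖ / (1 - lam2)) = (m : ℝ) * L * α * ‖G‖ / (1 - lam2) := by
        ring
      rw [e]
      rw [div_le_div_iff_of_pos_right hden]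
      have hmsq : (m : ℝ) ≤ (m : ℝ) ^ 2 := by nlinarith [hm1]
      nlinarith [mul_le_mul_of_nonneg_left hmsq (show (0:ℝ) ≤ L * α * ‖G‖ by positivity)]
    exact mul_le_mul_of_nonneg_right (h8.trans h9) (sq_nonneg _)
  linarith [hS, hsum, hHsum.trans hfinal]
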